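/- Let p ∈ (0,∞), let (Ω, 𝒜, μ) be a measure space, and let h : Ω → ℂ be a bounded measurable function with h ≠ 0 μ-almost everywhere. If a set M of functions in L^p(μ) is dense in L^p(μ), then the set {f·h : f ∈ M} is also dense in L^p(μ). -/

import Mathlib

open MeasureTheory Filter ENNReal Topology

/-- Lemma: for `p ∈ (0,∞)`, a measure space `(Ω,𝒜,μ)` and a bounded measurable `h : Ω → ℂ`
with `h ≠ 0` μ-a.e., if a set `M` of functions in `L^p(μ)` is dense in `L^p(μ)`, then so is
`{f·h : f ∈ M}`. -/
theorem stmt_4 (p : ℝ) (hp : 0 < p) {Ω : Type*} [MeasurableSpace Ω] (μ : Measure Ω)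
    (h : Ω → ℂ) (hmeas : Measurable h) (C : ℝ) (hbd : ∀ ω, ‖h ω‖ ≤ C)
    (hne : ∀ᵐ ω ∂μ, h ω ≠ 0)
    (M : Set (Ω → ℂ)) (hM : ∀ f ∈ M, MemLp f (ENNReal.ofReal p) μ)
    (hdense : ∀ g : Ω → ℂ, MemLp g (ENNReal.ofReal p) μ → ∀ ε : ℝ, 0 < ε → ∃ f ∈ M,
      eLpNorm (fun ω => f ω - g ω) (ENNReal.ofReal p) μ < ENNReal.ofReal ε) :
    ∀ g : Ω → ℂ, MemLp g (ENNReal.ofReal p) μ → ∀ ε : ℝ, 0 < ε → ∃ f ∈ M,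
      eLpNorm (fun ω => f ω * h ω - g ω) (ENNReal.ofReal p) μ < ENNReal.ofReal ε := by
  intro g hg ε hε
  set q := ENNReal.ofReal p with hq
  have hq0 : q ≠ 0 := (ENNReal.ofReal_pos.2 hp).ne'
  have hqtop : q ≠ ∞ := ENNReal.ofReal_ne_top
  have hqt : q.toReal = p := by rw [hq, ENNReal.toReal_ofReal hp.le]
  -- sets where h is bounded below
  set s : ℕ → Set Ω := fun n => {ω | ((n : ℝ) + 1)⁻¹ ≤ ‖h ω‖} with hs
  have hsmeas : ∀ n, MeasurableSet (s n) := fun n =>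
    measurableSet_le measurable_const hmeas.norm
  set G : ℕ → Ω → ℂ := fun n => (s n).indicator (fun ω => g ω / h ω) with hG
  have hdiv : AEStronglyMeasurable (fun ω => g ω / h ω) μ := by
    simp only [div_eq_mul_inv]
    exact hg.aestronglyMeasurable.mul hmeas.inv.aestronglyMeasurable
  have hGmeas : ∀ n, AEStronglyMeasurable (G n) μ := fun n =>
    hdiv.indicator (hsmeas n)
  have hGmem : ∀ n, MemLp (G n) q μ := by
    intro n
    refine hg.of_le_mul (c := (n : ℝ) + 1) (hGmeas n) (Eventually.of_forall fun ω => ?_)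
    by_cases hω : ω ∈ s n
    · rw [hG]
      simp only [Set.indicator_of_mem hω, norm_div]
      have h1 : (0:ℝ) < ((n : ℝ) + 1)⁻¹ := by positivity
      have h2 : ((n : ℝ) + 1)⁻¹ ≤ ‖h ω‖ := hω
      rw [div_eq_mul_inv, mul_comm]
      have h3 : ‖h ω‖⁻¹ ≤ (n : ℝ) + 1 := by
        calc ‖h ω‖⁻¹ ≤ (((n : ℝ) + 1)⁻¹)⁻¹ := by
              exact inv_anti₀ h1 h2
          _ = (n : ℝ) + 1 := inv_inv _
      exact mul_le_mul_of_nonneg_right h3 (norm_nonneg _)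
    · rw [hG]; simp only [Set.indicator_of_notMem hω, norm_zero]
      positivity
  -- key identity
  have hid : ∀ n ω, G n ω * h ω - g ω = -((s n)ᶜ.indicator g ω) := by
    intro n ω
    by_cases hω : ω ∈ s n
    · have hh : h ω ≠ 0 := by
        intro h0
        have : ((n : ℝ) + 1)⁻¹ ≤ ‖h ω‖ := hω
        rw [h0, norm_zero] at this
        have : (0:ℝ) < ((n : ℝ) + 1)⁻¹ := by positivity
        linarith
      rw [hG]
      simp [Set.indicator_of_mem hω, Set.indicator_of_notMem (by simpa using hω : ω ∉ (s n)ᶜ),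
        div_mul_cancel₀ _ hh]
    · rw [hG]
      simp [Set.indicator_of_notMem hω, Set.indicator_of_mem (by simpa using hω : ω ∈ (s n)ᶜ)]
  -- tendsto of lintegral
  set F : ℕ → ℝ≥0∞ := fun n => ∫⁻ ω, (s n)ᶜ.indicator (fun ω => (‖g ω‖₊ : ℝ≥0∞) ^ p) ω ∂μ with hF
  have hbound : ∫⁻ ω, (‖g ω‖₊ : ℝ≥0∞) ^ p ∂μ < ∞ := by
    have := lintegral_rpow_enorm_lt_top_of_eLpNorm_lt_top hq0 hqtop hg.2
    rwa [hqt] at this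
  have hFtendsto : Tendsto F atTop (𝓝 0) := by
    have h0 : (0 : ℝ≥0∞) = ∫⁻ _, (0 : ℝ≥0∞) ∂μ := by simp
    rw [h0]
    refine tendsto_lintegral_of_dominated_convergence' (fun ω => (‖g ω‖₊ : ℝ≥0∞) ^ p) ?_ ?_ hbound.ne ?_
    · intro n
      exact ((hg.aestronglyMeasurable.nnnorm.aemeasurable.coe_nnreal_ennreal.pow_const
        p).indicator (hsmeas n).compl)
    · intro n
      exact Eventually.of_forall fun ω => Set.indicator_le_self _ _ ω
    · filter_upwards [hne] with ω hω
      obtain ⟨N, hN⟩ := exists_nat_gt (‖h ω‖⁻¹)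
      have hev : ∀ᶠ n in atTop, (s n)ᶜ.indicator (fun ω => (‖g ω‖₊ : ℝ≥0∞) ^ p) ω = 0 := by
        filter_upwards [eventually_ge_atTop N] with n hn
        have hpos : (0:ℝ) < ‖h ω‖ := norm_pos_iff.2 hω
        have h4 : ‖h ω‖⁻¹ ≤ (n : ℝ) + 1 := by
          have : (N : ℝ) ≤ (n : ℝ) + 1 := by
            have := (Nat.cast_le (α := ℝ)).2 hn
            linarith
          linarith [hN]
        have : ((n : ℝ) + 1)⁻¹ ≤ ‖h ω‖ := by
          have := inv_anti₀ (inv_pos.2 hpos) h4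
          rwa [inv_inv] at this
        exact Set.indicator_of_notMem (by simpa [hs] using this) _
      exact Tendsto.congr' (by filter_upwards [hev] with n hn; exact hn.symm) tendsto_const_nhds
  -- constants
  set C' : ℝ := max C 1 with hC'
  have hC'pos : (0:ℝ) < C' := lt_of_lt_of_le one_pos (le_max_right _ _)
  set K : ℝ≥0∞ := LpAddConst q with hK
  set Kr : ℝ := K.toReal + 1 with hKr
  have hKrpos : (0:ℝ) < Kr := by positivity
  have hKle : K ≤ ENNReal.ofReal Kr := by
    calc K = ENNReal.ofReal K.toReal := (ENNReal.ofReal_toReal (LpAddConst_lt_top q).ne).symm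
      _ ≤ ENNReal.ofReal Kr := ENNReal.ofReal_le_ofReal (by rw [hKr]; linarith)
  set ε₁ : ℝ := ε / (4 * Kr) with hε₁
  set ε₂ : ℝ := ε / (4 * Kr * C') with hε₂
  have hε₁pos : 0 < ε₁ := by rw [hε₁]; positivity
  have hε₂pos : 0 < ε₂ := by rw [hε₂]; positivity
  -- choose n
  have hpow : (0:ℝ≥0∞) < (ENNReal.ofReal ε₁) ^ p :=
    ENNReal.rpow_pos (ENNReal.ofReal_pos.2 hε₁pos) ENNReal.ofReal_ne_top
  obtain ⟨n, hn⟩ : ∃ n, F n < (ENNReal.ofReal ε₁) ^ p :=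
    (hFtendsto.eventually (gt_mem_nhds hpow)).exists
  -- eLpNorm bound for the n-th approximation
  have e1 : eLpNorm (fun ω => G n ω * h ω - g ω) q μ = eLpNorm ((s n)ᶜ.indicator g) q μ := by
    rw [show (fun ω => G n ω * h ω - g ω) = -((s n)ᶜ.indicator g) from funext fun ω => hid n ω]
    exact eLpNorm_neg ((s n)ᶜ.indicator g) q μ
  have e2 : eLpNorm ((s n)ᶜ.indicator g) q μ = (F n) ^ (1 / p) := by
    rw [eLpNorm_eq_lintegral_rpow_enorm_toReal hq0 hqtop, hqt, hF]
    congr 1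
    apply lintegral_congr
    intro ω
    by_cases hω : ω ∈ (s n)ᶜ
    · rw [Set.indicator_of_mem hω, Set.indicator_of_mem hω]; rfl
    · rw [Set.indicator_of_notMem hω, Set.indicator_of_notMem hω]
      simp [ENNReal.zero_rpow_of_pos hp]
  have hf1 : eLpNorm (fun ω => G n ω * h ω - g ω) q μ < ENNReal.ofReal ε₁ := by
    rw [e1, e2]
    calc (F n) ^ (1/p) < ((ENNReal.ofReal ε₁) ^ p) ^ (1/p) :=
          ENNReal.rpow_lt_rpow hn (by positivity)
      _ = ENNReal.ofReal ε₁ := by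
          rw [← ENNReal.rpow_mul, mul_one_div_cancel hp.ne', ENNReal.rpow_one]
  -- choose f
  obtain ⟨f, hfM, hf2⟩ := hdense (G n) (hGmem n) ε₂ hε₂pos
  refine ⟨f, hfM, ?_⟩
  have hsplit : (fun ω => f ω * h ω - g ω) =
      (fun ω => (f ω - G n ω) * h ω) + (fun ω => G n ω * h ω - g ω) := by
    funext ω
    simp only [Pi.add_apply]
    ring
  have hm1 : AEStronglyMeasurable (fun ω => (f ω - G n ω) * h ω) μ :=
    (((hM f hfM).aestronglyMeasurable.sub (hGmeas n)).mul hmeas.aestronglyMeasurable)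
  have hm2 : AEStronglyMeasurable (fun ω => G n ω * h ω - g ω) μ :=
    (((hGmeas n).mul hmeas.aestronglyMeasurable).sub hg.aestronglyMeasurable)
  have b1 : eLpNorm (fun ω => (f ω - G n ω) * h ω) q μ ≤ ENNReal.ofReal C' * ENNReal.ofReal ε₂ := by
    calc eLpNorm (fun ω => (f ω - G n ω) * h ω) q μ
        ≤ ENNReal.ofReal C' * eLpNorm (fun ω => f ω - G n ω) q μ := by
          refine eLpNorm_le_mul_eLpNorm_of_ae_le_mul (Eventually.of_forall fun ω => ?_) q
          rw [norm_mul, mul_comm]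
          exact mul_le_mul_of_nonneg_right ((hbd ω).trans (le_max_left _ _)) (norm_nonneg _)
      _ ≤ ENNReal.ofReal C' * ENNReal.ofReal ε₂ := mul_le_mul_right hf2.le _
  have hcalc : Kr * (C' * ε₂ + ε₁) = ε / 2 := by
    rw [hε₁, hε₂]
    field_simp
    ring
  calc eLpNorm (fun ω => f ω * h ω - g ω) q μ
      ≤ K * (eLpNorm (fun ω => (f ω - G n ω) * h ω) q μ
          + eLpNorm (fun ω => G n ω * h ω - g ω) q μ) := by
        rw [hsplit]
        exact eLpNorm_add_le' hm1 hm2 q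
    _ ≤ ENNReal.ofReal Kr * (ENNReal.ofReal C' * ENNReal.ofReal ε₂ + ENNReal.ofReal ε₁) :=
        mul_le_mul' hKle (add_le_add b1 hf1.le)
    _ = ENNReal.ofReal (Kr * (C' * ε₂ + ε₁)) := by
        rw [← ENNReal.ofReal_mul hC'pos.le, ← ENNReal.ofReal_add (by positivity) hε₁pos.le,
          ← ENNReal.ofReal_mul hKrpos.le]
    _ = ENNReal.ofReal (ε / 2) := by rw [hcalc]
    _ < ENNReal.ofReal ε := (ENNReal.ofReal_lt_ofReal_iff hε).2 (by linarith)
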